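/- For all integers M ≥ 2 and 1 ≤ m ≤ M−1 and all complex numbers z, the m-th derivative of p_m satisfies |p_m^{(m)}(z)| ≤ m²·2^{6m}·m!·( max(|z|, M) )^m. -/

import Mathlib

open Finset Polynomial

/-- The polynomial `p_m(x) = x(x−1)⋯(x−m+1)·(x−M)(x−M−1)⋯(x−M−m+1)` as a polynomial over `ℂ`. -/
noncomputable def discreteChebPoly (M m : ℕ) : Polynomial ℂ :=
  (∏ i ∈ Finset.range m, (X - C (i : ℂ))) * ∏ i ∈ Finset.range m, (X - C ((M : ℂ) + i))

lemma coeff_list_prod_bound (R : ℝ) (hR : 1 ≤ R) :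
    ∀ (l : List ℂ), (∀ a ∈ l, ‖a‖ ≤ R) → ∀ k : ℕ,
      ‖((l.map fun a => X - C a).prod).coeff k‖
        ≤ (l.length.choose k) * R ^ (l.length - k) := by
  have hR0 : (0:ℝ) ≤ R := le_trans zero_le_one hR
  intro l
  induction l with
  | nil =>
      intro _ k
      cases k with
      | zero => simp
      | succ j => simp [Polynomial.coeff_one]
  | cons a l ih =>
      intro h k
      have ha : ‖a‖ ≤ R := h a (List.mem_cons_self)
      have hl : ∀ b ∈ l, ‖b‖ ≤ R := fun b hb => h b (List.mem_cons_of_mem a hb)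
      set P := (l.map fun a => X - C a).prod with hP
      have hprod : ((a :: l).map fun a => X - C a).prod = (X - C a) * P := by
        simp [hP]
      rw [hprod]
      have hexp : ((X - C a) * P).coeff k = (X * P).coeff k - a * P.coeff k := by
        rw [sub_mul, coeff_sub, coeff_C_mul]
      rw [hexp]
      set n := l.length with hn
      have hlen : (a :: l).length = n + 1 := by simp [hn]
      rw [hlen]
      cases k with
      | zero =>
          rw [Polynomial.coeff_X_mul_zero]
          have : ‖0 - a * P.coeff 0‖ ≤ R * ((n.choose 0) * R ^ (n - 0)) := by
            rw [zero_sub, norm_neg, norm_mul]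
            exact mul_le_mul ha (ih hl 0) (norm_nonneg _) hR0
          refine this.trans ?_
          simp only [Nat.choose_zero_right, Nat.cast_one, one_mul, Nat.sub_zero]
          exact le_of_eq (by rw [pow_succ]; ring)
      | succ j =>
          rw [Polynomial.coeff_X_mul]
          have h1 : ‖P.coeff j‖ ≤ (n.choose j) * R ^ (n - j) := ih hl j
          have h2 : ‖a * P.coeff (j+1)‖ ≤ (n.choose (j+1)) * R ^ (n - j) := by
            rw [norm_mul]
            rcases lt_or_ge j n with hj | hj
            · have : ‖a‖ * ‖P.coeff (j+1)‖
                  ≤ R * ((n.choose (j+1)) * R ^ (n - (j+1))) :=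
                mul_le_mul ha (ih hl (j+1)) (norm_nonneg _) hR0
              refine this.trans (le_of_eq ?_)
              rw [mul_comm R, mul_assoc, ← pow_succ]
              congr 2
              omega
            · have hc : n.choose (j+1) = 0 := Nat.choose_eq_zero_of_lt (by omega)
              have h0 : ‖P.coeff (j+1)‖ ≤ 0 := by
                have := ih hl (j+1)
                rwa [hc, Nat.cast_zero, zero_mul] at this
              have : ‖P.coeff (j+1)‖ = 0 :=
                le_antisymm h0 (norm_nonneg _)
              rw [this, mul_zero, hc, Nat.cast_zero, zero_mul]
          calc ‖P.coeff j - a * P.coeff (j+1)‖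
              ≤ ‖P.coeff j‖ + ‖a * P.coeff (j+1)‖ := by
                exact (norm_sub_le _ _)
            _ ≤ (n.choose j) * R ^ (n - j) + (n.choose (j+1)) * R ^ (n - j) := by
                exact add_le_add h1 h2
            _ = ((n+1).choose (j+1)) * R ^ ((n+1) - (j+1)) := by
                rw [Nat.succ_sub_succ, ← add_mul, ← Nat.cast_add, Nat.choose_succ_succ,
                  Nat.add_comm (n.choose j)]

lemma prod_range_eq (g : ℕ → Polynomial ℂ) (n : ℕ) :
    ∏ i ∈ Finset.range n, g i = ((List.range n).map g).prod := by
  rw [Finset.prod_eq_multiset_prod]; rfl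

/-- For all integers `M ≥ 2`, `1 ≤ m ≤ M−1`, and all `z ∈ ℂ`, the `m`-th
derivative of `p_m` satisfies `|p_m^{(m)}(z)| ≤ m²·2^{6m}·m!·(max(|z|, M))^m`. -/
theorem stmt7 (M m : ℕ) (hM : 2 ≤ M) (hm1 : 1 ≤ m) (hm2 : m + 1 ≤ M) (z : ℂ) :
    ‖(Polynomial.derivative^[m] (discreteChebPoly M m)).eval z‖
      ≤ (m : ℝ) ^ 2 * 2 ^ (6 * m) * (m.factorial : ℝ) * (max (‖z‖) M) ^ m := by
  set A : ℝ := max (‖z‖) M with hA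
  have hA2 : (2:ℝ) ≤ A := le_trans (by exact_mod_cast hM) (le_max_right _ _)
  have hA1 : (1:ℝ) ≤ A := le_trans one_le_two hA2
  have hA0 : (0:ℝ) ≤ A := le_trans zero_le_one hA1
  have hzA : ‖z‖ ≤ A := le_max_left _ _
  -- express discreteChebPoly as a list product
  set l : List ℂ := ((List.range m).map fun i : ℕ => (i : ℂ)) ++
      ((List.range m).map fun i : ℕ => ((M : ℂ) + (i : ℂ))) with hl
  have hlen : l.length = 2 * m := by
    simp only [hl, List.length_append, List.length_map, List.length_range]
    omega
  have hform : discreteChebPoly M m = (l.map fun a => X - C a).prod := by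
    rw [discreteChebPoly, prod_range_eq, prod_range_eq, hl, List.map_append,
      List.prod_append, List.map_map, List.map_map]
    rfl
  have hroots : ∀ a ∈ l, ‖a‖ ≤ 2 * A := by
    intro a hal
    rw [hl] at hal
    rcases List.mem_append.1 hal with hx | hx <;>
      obtain ⟨i, hi, rfl⟩ := List.mem_map.1 hx <;> rw [List.mem_range] at hi
    · rw [Complex.norm_natCast]
      have : (i:ℝ) ≤ M := by exact_mod_cast le_of_lt (lt_of_lt_of_le hi (by omega))
      have hMA : (M:ℝ) ≤ A := le_max_right _ _
      nlinarith
    · have : ‖(M:ℂ) + i‖ ≤ M + i := by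
        refine (norm_add_le _ _).trans ?_
        rw [Complex.norm_natCast, Complex.norm_natCast]
      refine this.trans ?_
      have hiM : (i:ℝ) ≤ M := by exact_mod_cast le_of_lt (lt_of_lt_of_le hi (by omega))
      have hMA : (M:ℝ) ≤ A := le_max_right _ _
      nlinarith
  have hcoeff : ∀ j : ℕ, ‖(discreteChebPoly M m).coeff j‖
      ≤ ((2*m).choose j) * (2*A) ^ (2*m - j) := by
    intro j
    have h := coeff_list_prod_bound (2*A) (by linarith) l hroots j
    rw [hlen] at h
    rwa [hform]
  -- degree bound
  have hdeg : (discreteChebPoly M m).natDegree ≤ 2 * m := by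
    rw [hform]
    refine (Polynomial.natDegree_list_prod_le _).trans ?_
    rw [List.map_map]
    calc (l.map (Polynomial.natDegree ∘ fun a => X - C a)).sum
        ≤ (l.map fun _ => 1).sum := by
          apply List.sum_le_sum
          intro a _
          simp [Function.comp]
      _ = l.length := by simp
      _ = 2 * m := hlen
  set q := Polynomial.derivative^[m] (discreteChebPoly M m) with hq
  have hqdeg : q.natDegree < m + 1 := by
    have h := Polynomial.natDegree_iterate_derivative (discreteChebPoly M m) m
    rw [← hq] at h
    omega
  rw [Polynomial.eval_eq_sum_range' hqdeg]
  -- bound each term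
  have hterm : ∀ k ∈ Finset.range (m+1),
      ‖q.coeff k * z ^ k‖ ≤ 2 ^ (5*m) * (m.factorial : ℝ) * A ^ m := by
    intro k hk
    rw [Finset.mem_range] at hk
    have hkm : k ≤ m := by omega
    have hco : q.coeff k = ((k + m).descFactorial m : ℂ) * (discreteChebPoly M m).coeff (k + m) := by
      rw [hq, Polynomial.coeff_iterate_derivative, nsmul_eq_mul]
    rw [norm_mul, hco, norm_mul, Complex.norm_natCast, norm_pow]
    have hd : ((k+m).descFactorial m : ℝ) ≤ 2 ^ (2*m) * m.factorial := by
      have h1 : (k+m).descFactorial m ≤ (2*m).descFactorial m :=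
        Nat.descFactorial_le m (by omega)
      have h2 : (2*m).descFactorial m = m.factorial * (2*m).choose m :=
        Nat.descFactorial_eq_factorial_mul_choose _ _
      have h3 : (2*m).choose m ≤ 2 ^ (2*m) := by
        calc (2*m).choose m ≤ ∑ i ∈ Finset.range (2*m+1), (2*m).choose i :=
              Finset.single_le_sum (f := fun i => (2*m).choose i)
                (fun i _ => Nat.zero_le _) (Finset.mem_range.2 (by omega))
          _ = 2 ^ (2*m) := Nat.sum_range_choose (2*m)
      have : (k+m).descFactorial m ≤ 2 ^ (2*m) * m.factorial := by
        calc (k+m).descFactorial m ≤ m.factorial * (2*m).choose m := h2 ▸ h1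
          _ ≤ m.factorial * 2 ^ (2*m) := Nat.mul_le_mul_left _ h3
          _ = 2 ^ (2*m) * m.factorial := Nat.mul_comm _ _
      exact_mod_cast this
    have hcb : ‖(discreteChebPoly M m).coeff (k+m)‖
        ≤ 2 ^ (2*m) * (2*A) ^ (m - k) := by
      refine (hcoeff (k+m)).trans ?_
      have hch : ((2*m).choose (k+m) : ℝ) ≤ 2 ^ (2*m) := by
        have : (2*m).choose (k+m) ≤ 2 ^ (2*m) := by
          rcases le_or_gt (k+m) (2*m) with h | h
          · calc (2*m).choose (k+m) ≤ ∑ i ∈ Finset.range (2*m+1), (2*m).choose i :=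
                  Finset.single_le_sum (f := fun i => (2*m).choose i)
                    (fun i _ => Nat.zero_le _) (Finset.mem_range.2 (by omega))
              _ = 2 ^ (2*m) := Nat.sum_range_choose (2*m)
          · rw [Nat.choose_eq_zero_of_lt h]; positivity
        exact_mod_cast this
      have h2mk : 2*m - (k+m) = m - k := by omega
      rw [h2mk]
      exact mul_le_mul_of_nonneg_right hch (by positivity)
    have hz : ‖z‖ ^ k ≤ A ^ k := pow_le_pow_left₀ (norm_nonneg z) hzA k
    calc ((k+m).descFactorial m : ℝ) * ‖(discreteChebPoly M m).coeff (k+m)‖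
          * ‖z‖ ^ k
        ≤ (2 ^ (2*m) * m.factorial) * (2 ^ (2*m) * (2*A) ^ (m-k)) * A ^ k := by
          refine mul_le_mul (mul_le_mul hd hcb (norm_nonneg _) (by positivity)) hz
            (by positivity) (by positivity)
      _ = 2 ^ (4*m) * (m.factorial : ℝ) * (2 ^ (m-k) * (A ^ (m-k) * A ^ k)) := by
          rw [mul_pow, show 4*m = 2*m+2*m by ring, pow_add]; ring
      _ ≤ 2 ^ (4*m) * (m.factorial : ℝ) * (2 ^ m * A ^ m) := by
          have he : A ^ (m-k) * A ^ k = A ^ m := by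
            rw [← pow_add]; congr 1; omega
          rw [he]
          have h2 : (2:ℝ) ^ (m-k) ≤ 2 ^ m := pow_le_pow_right₀ one_le_two (by omega)
          have := mul_le_mul_of_nonneg_right h2 (by positivity : (0:ℝ) ≤ A ^ m)
          nlinarith [Nat.one_le_two_pow (n := 4*m) , (by positivity : (0:ℝ) ≤ 2 ^ (4*m) * (m.factorial:ℝ)), this]
      _ = 2 ^ (5*m) * (m.factorial : ℝ) * A ^ m := by
          rw [show 5*m = 4*m+m by ring, pow_add]; ring
  calc ‖∑ k ∈ Finset.range (m+1), q.coeff k * z ^ k‖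
      ≤ ∑ k ∈ Finset.range (m+1), ‖q.coeff k * z ^ k‖ :=
        norm_sum_le _ _
    _ ≤ ∑ k ∈ Finset.range (m+1), (2 ^ (5*m) * (m.factorial : ℝ) * A ^ m) :=
        Finset.sum_le_sum hterm
    _ = (m+1) * (2 ^ (5*m) * (m.factorial : ℝ) * A ^ m) := by
        rw [Finset.sum_const, Finset.card_range, nsmul_eq_mul]; push_cast; ring
    _ ≤ (m : ℝ) ^ 2 * 2 ^ (6 * m) * (m.factorial : ℝ) * A ^ m := by
        have h1 : ((m:ℝ) + 1) ≤ (m:ℝ)^2 * 2 ^ m := by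
          have hm : (1:ℝ) ≤ m := by exact_mod_cast hm1
          have h2 : (2:ℝ) ≤ 2 ^ m := by
            calc (2:ℝ) = 2^1 := (pow_one 2).symm
            _ ≤ 2 ^ m := pow_le_pow_right₀ one_le_two hm1
          nlinarith
        have h2 : (0:ℝ) ≤ 2 ^ (5*m) * (m.factorial : ℝ) * A ^ m := by positivity
        have key : ((m:ℝ)+1) * (2 ^ (5*m) * (m.factorial : ℝ) * A ^ m)
            ≤ ((m:ℝ)^2 * 2^m) * (2 ^ (5*m) * (m.factorial : ℝ) * A ^ m) :=
          mul_le_mul_of_nonneg_right h1 h2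
        refine key.trans (le_of_eq ?_)
        rw [show 6*m = m + 5*m by ring, pow_add]
        ring
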